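/- arXiv:1201.5129 — 3 statements merged into one kernel-verified Lean document; each statement's English description precedes it below -/
import Mathlib

section
/- The function g(y) = (log(cosh y))^{1/2} is subadditive on the nonnegative reals: for all x, y ≥ 0, g(x + y) ≤ g(x) + g(y). -/
open Real

private lemma tanh_sq_le_two_log_cosh (x : ℝ) (hx : 0 ≤ x) :
    (Real.sinh x / Real.cosh x) ^ 2 ≤ 2 * Real.log (Real.cosh x) := by
  set f : ℝ → ℝ := fun x => 2 * Real.log (Real.cosh x) - (Real.sinh x / Real.cosh x) ^ 2 with hf
  have hD : ∀ z : ℝ, HasDerivAt f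
      (2 * (Real.sinh z / Real.cosh z) - 2 * (Real.sinh z / Real.cosh z) *
        (1 / Real.cosh z ^ 2)) z := by
    intro z
    have hc := Real.cosh_pos z
    have h1 : HasDerivAt (fun x => Real.log (Real.cosh x)) (Real.sinh z / Real.cosh z) z :=
      (Real.hasDerivAt_cosh z).log hc.ne'
    have h2 : HasDerivAt (fun x => Real.sinh x / Real.cosh x)
        ((Real.cosh z * Real.cosh z - Real.sinh z * Real.sinh z) / Real.cosh z ^ 2) z :=
      (Real.hasDerivAt_sinh z).div (Real.hasDerivAt_cosh z) hc.ne'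
    have h2' : HasDerivAt (fun x => Real.sinh x / Real.cosh x) (1 / Real.cosh z ^ 2) z := by
      convert h2 using 1
      rw [← Real.cosh_sq_sub_sinh_sq z]; ring
    have := (h1.const_mul 2).sub (h2'.pow 2)
    exact this.congr_deriv (by norm_num)
  have hmono : MonotoneOn f (Set.Ici (0:ℝ)) := by
    apply monotoneOn_of_deriv_nonneg (convex_Ici 0)
    · exact (fun z _ => (hD z).differentiableAt.continuousAt.continuousWithinAt)
    · exact fun z _ => (hD z).differentiableAt.differentiableWithinAt
    · intro z hz
      rw [(hD z).deriv]
      have hz0 : (0:ℝ) ≤ z := le_of_lt (by simpa using hz)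
      have hc := Real.cosh_pos z
      have ht : 0 ≤ Real.sinh z / Real.cosh z :=
        div_nonneg (Real.sinh_nonneg_iff.2 hz0) hc.le
      have h1 : 1 / Real.cosh z ^ 2 ≤ 1 := by
        rw [div_le_one (by positivity)]
        nlinarith [Real.one_le_cosh z]
      nlinarith
  have h0 : f 0 = 0 := by simp [hf]
  have := hmono (Set.self_mem_Ici) (Set.mem_Ici.2 hx) hx
  rw [h0] at this
  simpa [hf] using this

/-- The function `g(y) = (log (cosh y))^{1/2}` is subadditive on the nonnegative reals. -/
theorem sqrt_log_cosh_subadditive (x y : ℝ) (hx : 0 ≤ x) (hy : 0 ≤ y) :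
    Real.sqrt (Real.log (Real.cosh (x + y))) ≤
      Real.sqrt (Real.log (Real.cosh x)) + Real.sqrt (Real.log (Real.cosh y)) := by
  set a := Real.log (Real.cosh x) with ha
  set b := Real.log (Real.cosh y) with hb
  have ha0 : 0 ≤ a := Real.log_nonneg (Real.one_le_cosh x)
  have hb0 : 0 ≤ b := Real.log_nonneg (Real.one_le_cosh y)
  set tx := Real.sinh x / Real.cosh x with htx
  set ty := Real.sinh y / Real.cosh y with hty
  have hcx := Real.cosh_pos x
  have hcy := Real.cosh_pos y
  have htx0 : 0 ≤ tx := div_nonneg (Real.sinh_nonneg_iff.2 hx) hcx.le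
  have hty0 : 0 ≤ ty := div_nonneg (Real.sinh_nonneg_iff.2 hy) hcy.le
  -- log cosh(x+y) ≤ a + b + tx * ty
  have key : Real.log (Real.cosh (x + y)) ≤ a + b + tx * ty := by
    have heq : Real.cosh (x + y) = Real.cosh x * Real.cosh y * (1 + tx * ty) := by
      rw [Real.cosh_add]; field_simp [htx, hty]; rw [htx, hty]; field_simp
    have hpos : (0:ℝ) < 1 + tx * ty := by positivity
    rw [heq, Real.log_mul (by positivity) hpos.ne', Real.log_mul hcx.ne' hcy.ne']
    have := Real.log_le_sub_one_of_pos hpos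
    linarith
  -- tx ≤ sqrt (2a), ty ≤ sqrt (2b)
  have htxle : tx ≤ Real.sqrt (2 * a) :=
    (Real.le_sqrt htx0 (by positivity)).2 (tanh_sq_le_two_log_cosh x hx)
  have htyle : ty ≤ Real.sqrt (2 * b) :=
    (Real.le_sqrt hty0 (by positivity)).2 (tanh_sq_le_two_log_cosh y hy)
  have hprod : tx * ty ≤ 2 * Real.sqrt a * Real.sqrt b := by
    calc tx * ty ≤ Real.sqrt (2 * a) * Real.sqrt (2 * b) :=
          mul_le_mul htxle htyle hty0 (Real.sqrt_nonneg _)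
      _ = (Real.sqrt 2 * Real.sqrt 2) * (Real.sqrt a * Real.sqrt b) := by
          rw [Real.sqrt_mul (by norm_num : (0:ℝ) ≤ 2),
            Real.sqrt_mul (by norm_num : (0:ℝ) ≤ 2)]; ring
      _ = 2 * Real.sqrt a * Real.sqrt b := by
          rw [Real.mul_self_sqrt (by norm_num : (0:ℝ) ≤ 2)]; ring
  have hsq : Real.log (Real.cosh (x + y)) ≤ (Real.sqrt a + Real.sqrt b) ^ 2 := by
    have hA : Real.sqrt a ^ 2 = a := Real.sq_sqrt ha0
    have hB : Real.sqrt b ^ 2 = b := Real.sq_sqrt hb0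
    nlinarith [key, hprod]
  calc Real.sqrt (Real.log (Real.cosh (x + y)))
      ≤ Real.sqrt ((Real.sqrt a + Real.sqrt b) ^ 2) := Real.sqrt_le_sqrt hsq
    _ = Real.sqrt a + Real.sqrt b := Real.sqrt_sq (by positivity)
end

section
/- Let F be a nonzero finitely supported sequence in the open unit disc, let N_- be the smallest and N_+ the largest index with F nonzero, and let (a, b) be its nonlinear Fourier transform. Then b, as a Laurent polynomial, has exact lowest degree N_- and exact highest degree N_+, and a has exact lowest degree N_- − N_+ and exact highest degree 0. -/
open LaurentPolynomial

/-- The transfer matrix as a matrix of Laurent polynomials. -/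
noncomputable def transferL (F : ℤ → ℂ) (n : ℤ) : Matrix (Fin 2) (Fin 2) (LaurentPolynomial ℂ) :=
  !![LaurentPolynomial.C (((Real.sqrt (1 - ‖F n‖ ^ 2))⁻¹ : ℝ) : ℂ),
     LaurentPolynomial.C ((((Real.sqrt (1 - ‖F n‖ ^ 2))⁻¹ : ℝ) : ℂ) * F n) * T n;
     LaurentPolynomial.C ((((Real.sqrt (1 - ‖F n‖ ^ 2))⁻¹ : ℝ) : ℂ) *
        (starRingEnd ℂ) (F n)) * T (-n),
     LaurentPolynomial.C (((Real.sqrt (1 - ‖F n‖ ^ 2))⁻¹ : ℝ) : ℂ)]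

/-- The nonlinear Fourier transform as a matrix of Laurent polynomials. -/
noncomputable def nlftL (F : ℤ → ℂ) (s : Finset ℤ) : Matrix (Fin 2) (Fin 2) (LaurentPolynomial ℂ) :=
  ((s.sort (· ≤ ·)).map (transferL F)).prod

namespace NlftAux

/-- The normalization constant. -/
noncomputable def cc (F : ℤ → ℂ) (n : ℤ) : ℂ :=
  (((Real.sqrt (1 - ‖F n‖ ^ 2))⁻¹ : ℝ) : ℂ)

lemma mul_CT_apply (p : LaurentPolynomial ℂ) (a : ℂ) (n k : ℤ) :
    (p * (LaurentPolynomial.C a * T n) : LaurentPolynomial ℂ).coeff k = p.coeff (k - n) * a := by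
  rw [← single_eq_C_mul_T]
  exact AddMonoidAlgebra.coeff_mul_single_apply p a n k

lemma mul_C_apply (p : LaurentPolynomial ℂ) (a : ℂ) (k : ℤ) :
    (p * LaurentPolynomial.C a : LaurentPolynomial ℂ).coeff k = p.coeff k * a := by
  have := mul_CT_apply p a 0 k
  simpa using this

lemma CT_apply (a : ℂ) (n k : ℤ) :
    (LaurentPolynomial.C a * T n : LaurentPolynomial ℂ).coeff k = if n = k then a else 0 := by
  rw [← single_eq_C_mul_T]
  rw [AddMonoidAlgebra.coeff_single]; exact Finsupp.single_apply

lemma cc_ne_zero {F : ℤ → ℂ} {n : ℤ} (h : ‖F n‖ < 1) : cc F n ≠ 0 := by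
  have h0 : (0:ℝ) ≤ ‖F n‖ := norm_nonneg _
  have h1 : (0:ℝ) < 1 - ‖F n‖ ^ 2 := by nlinarith
  have hs : (0:ℝ) < Real.sqrt (1 - ‖F n‖ ^ 2) := Real.sqrt_pos.mpr h1
  simp only [cc, ne_eq, Complex.ofReal_eq_zero, inv_eq_zero]
  exact ne_of_gt hs

lemma t00 (F : ℤ → ℂ) (n : ℤ) : transferL F n 0 0 = LaurentPolynomial.C (cc F n) := by
  simp [transferL, cc]

lemma t01 (F : ℤ → ℂ) (n : ℤ) :
    transferL F n 0 1 = LaurentPolynomial.C (cc F n * F n) * T n := by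
  simp [transferL, cc]

lemma t10 (F : ℤ → ℂ) (n : ℤ) :
    transferL F n 1 0 = LaurentPolynomial.C (cc F n * (starRingEnd ℂ) (F n)) * T (-n) := by
  simp [transferL, cc]

lemma t11 (F : ℤ → ℂ) (n : ℤ) : transferL F n 1 1 = LaurentPolynomial.C (cc F n) := by
  simp [transferL, cc]

/-- The invariant carried through the induction. -/
def Inv (P : Matrix (Fin 2) (Fin 2) (LaurentPolynomial ℂ)) (m M : ℤ) : Prop :=
  ((P 0 0).coeff 0 ≠ 0 ∧ (P 0 0).coeff (m - M) ≠ 0 ∧ (∀ k, (P 0 0).coeff k ≠ 0 → m - M ≤ k ∧ k ≤ 0)) ∧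
  ((P 0 1).coeff m ≠ 0 ∧ (P 0 1).coeff M ≠ 0 ∧ (∀ k, (P 0 1).coeff k ≠ 0 → m ≤ k ∧ k ≤ M)) ∧
  ((P 1 0).coeff (-M) ≠ 0 ∧ (P 1 0).coeff (-m) ≠ 0 ∧ (∀ k, (P 1 0).coeff k ≠ 0 → -M ≤ k ∧ k ≤ -m)) ∧
  ((P 1 1).coeff 0 ≠ 0 ∧ (P 1 1).coeff (M - m) ≠ 0 ∧ (∀ k, (P 1 1).coeff k ≠ 0 → 0 ≤ k ∧ k ≤ M - m))

lemma transferL_eq_one {F : ℤ → ℂ} {n : ℤ} (h : F n = 0) : transferL F n = 1 := by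
  rw [transferL, h]
  norm_num
  exact (Matrix.one_fin_two (α := LaurentPolynomial ℂ)).symm

lemma prod_all_zero (F : ℤ → ℂ) : ∀ (l : List ℤ), (∀ x ∈ l, F x = 0) →
    ((l.map (transferL F)).prod) = 1 := by
  intro l
  induction l with
  | nil => simp
  | cons a l ih =>
      intro h
      simp only [List.map_cons, List.prod_cons]
      rw [transferL_eq_one (h a (by simp)), ih (fun x hx => h x (by simp [hx])), one_mul]

lemma inv_base {F : ℤ → ℂ} {n : ℤ} (hn : F n ≠ 0) (hF : ‖F n‖ < 1) :
    Inv (transferL F n) n n := by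
  have hc := cc_ne_zero hF
  have hconj : (starRingEnd ℂ) (F n) ≠ 0 := by simpa using hn
  refine ⟨⟨?_, ?_, ?_⟩, ⟨?_, ?_, ?_⟩, ⟨?_, ?_, ?_⟩, ⟨?_, ?_, ?_⟩⟩
  · rw [t00, C_apply, if_pos rfl]; exact hc
  · rw [t00, show n - n = 0 by ring, C_apply, if_pos rfl]; exact hc
  · intro k hk
    rw [t00, C_apply] at hk
    rcases eq_or_ne k 0 with h | h
    · omega
    · exact absurd (if_neg h) (by exact fun hh => hk (hh.symm ▸ rfl) : ¬ _)
  · rw [t01, CT_apply, if_pos rfl]; exact mul_ne_zero hc hn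
  · rw [t01, CT_apply, if_pos rfl]; exact mul_ne_zero hc hn
  · intro k hk
    rw [t01, CT_apply] at hk
    rcases eq_or_ne n k with h | h
    · omega
    · exact absurd (if_neg h) fun hh => hk hh
  · rw [t10, CT_apply, if_pos rfl]; exact mul_ne_zero hc hconj
  · rw [t10, CT_apply, if_pos rfl]; exact mul_ne_zero hc hconj
  · intro k hk
    rw [t10, CT_apply] at hk
    rcases eq_or_ne (-n) k with h | h
    · omega
    · exact absurd (if_neg h) fun hh => hk hh
  · rw [t11, C_apply, if_pos rfl]; exact hc
  · rw [t11, show n - n = 0 by ring, C_apply, if_pos rfl]; exact hc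
  · intro k hk
    rw [t11, C_apply] at hk
    rcases eq_or_ne k 0 with h | h
    · omega
    · exact absurd (if_neg h) fun hh => hk hh

lemma inv_step {F : ℤ → ℂ} {n m M : ℤ} (hF : ‖F n‖ < 1) (hn : F n ≠ 0)
    (hMn : M < n) {P : Matrix (Fin 2) (Fin 2) (LaurentPolynomial ℂ)}
    (h : Inv P m M) : Inv (P * transferL F n) m n := by
  have hc := cc_ne_zero hF
  have hconj : (starRingEnd ℂ) (F n) ≠ 0 := by simpa using hn
  obtain ⟨⟨h000, h00m, h00s⟩, ⟨h01m, h01M, h01s⟩, ⟨h10M, h10m, h10s⟩, ⟨h110, h11M, h11s⟩⟩ := h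
  have hmM : m ≤ M := (h01s m h01m).2
  have key : ∀ (i j : Fin 2) (k : ℤ), ((P * transferL F n) i j).coeff k =
      (P i 0 * transferL F n 0 j : LaurentPolynomial ℂ).coeff k
        + (P i 1 * transferL F n 1 j : LaurentPolynomial ℂ).coeff k := by
    intro i j k
    rw [Matrix.mul_apply, Fin.sum_univ_two]
    rfl
  have k00 : ∀ k, ((P * transferL F n) 0 0).coeff k
      = (P 0 0).coeff k * cc F n + (P 0 1).coeff (k + n) * (cc F n * (starRingEnd ℂ) (F n)) := by
    intro k
    rw [key, t00, t10, mul_C_apply, mul_CT_apply, sub_neg_eq_add]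
  have k01 : ∀ k, ((P * transferL F n) 0 1).coeff k
      = (P 0 0).coeff (k - n) * (cc F n * F n) + (P 0 1).coeff k * cc F n := by
    intro k
    rw [key, t01, t11, mul_C_apply, mul_CT_apply]
  have k10 : ∀ k, ((P * transferL F n) 1 0).coeff k
      = (P 1 0).coeff k * cc F n + (P 1 1).coeff (k + n) * (cc F n * (starRingEnd ℂ) (F n)) := by
    intro k
    rw [key, t00, t10, mul_C_apply, mul_CT_apply, sub_neg_eq_add]
  have k11 : ∀ k, ((P * transferL F n) 1 1).coeff k
      = (P 1 0).coeff (k - n) * (cc F n * F n) + (P 1 1).coeff k * cc F n := by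
    intro k
    rw [key, t01, t11, mul_C_apply, mul_CT_apply]
  have z00 : ∀ k, ¬ (m - M ≤ k ∧ k ≤ 0) → (P 0 0).coeff k = 0 := fun k hk => by
    by_contra hco; exact hk (h00s k hco)
  have z01 : ∀ k, ¬ (m ≤ k ∧ k ≤ M) → (P 0 1).coeff k = 0 := fun k hk => by
    by_contra hco; exact hk (h01s k hco)
  have z10 : ∀ k, ¬ (-M ≤ k ∧ k ≤ -m) → (P 1 0).coeff k = 0 := fun k hk => by
    by_contra hco; exact hk (h10s k hco)
  have z11 : ∀ k, ¬ (0 ≤ k ∧ k ≤ M - m) → (P 1 1).coeff k = 0 := fun k hk => by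
    by_contra hco; exact hk (h11s k hco)
  refine ⟨⟨?_, ?_, ?_⟩, ⟨?_, ?_, ?_⟩, ⟨?_, ?_, ?_⟩, ⟨?_, ?_, ?_⟩⟩
  · rw [k00, z01 (0 + n) (by omega), zero_mul, add_zero]
    exact mul_ne_zero h000 hc
  · rw [k00, z00 (m - n) (by omega), zero_mul, zero_add, show m - n + n = m by ring]
    exact mul_ne_zero h01m (mul_ne_zero hc hconj)
  · intro k hk
    rw [k00] at hk
    have hcase : (P 0 0).coeff k ≠ 0 ∨ (P 0 1).coeff (k + n) ≠ 0 := by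
      by_contra hco
      push_neg at hco
      rw [hco.1, hco.2, zero_mul, zero_mul, add_zero] at hk
      exact hk rfl
    rcases hcase with hA | hB
    · have := h00s k hA; omega
    · have := h01s _ hB; omega
  · rw [k01, z00 (m - n) (by omega), zero_mul, zero_add]
    exact mul_ne_zero h01m hc
  · rw [k01, z01 n (by omega), zero_mul, add_zero, sub_self]
    exact mul_ne_zero h000 (mul_ne_zero hc hn)
  · intro k hk
    rw [k01] at hk
    have hcase : (P 0 0).coeff (k - n) ≠ 0 ∨ (P 0 1).coeff k ≠ 0 := by
      by_contra hco
      push_neg at hco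
      rw [hco.1, hco.2, zero_mul, zero_mul, add_zero] at hk
      exact hk rfl
    rcases hcase with hA | hB
    · have := h00s _ hA; omega
    · have := h01s k hB; omega
  · rw [k10, z10 (-n) (by omega), zero_mul, zero_add, show -n + n = 0 by ring]
    exact mul_ne_zero h110 (mul_ne_zero hc hconj)
  · rw [k10, z11 (-m + n) (by omega), zero_mul, add_zero]
    exact mul_ne_zero h10m hc
  · intro k hk
    rw [k10] at hk
    have hcase : (P 1 0).coeff k ≠ 0 ∨ (P 1 1).coeff (k + n) ≠ 0 := by
      by_contra hco
      push_neg at hco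
      rw [hco.1, hco.2, zero_mul, zero_mul, add_zero] at hk
      exact hk rfl
    rcases hcase with hA | hB
    · have := h10s k hA; omega
    · have := h11s _ hB; omega
  · rw [k11, z10 (0 - n) (by omega), zero_mul, zero_add]
    exact mul_ne_zero h110 hc
  · rw [k11, z11 (n - m) (by omega), zero_mul, add_zero, show n - m - n = -m by ring]
    exact mul_ne_zero h10m (mul_ne_zero hc hn)
  · intro k hk
    rw [k11] at hk
    have hcase : (P 1 0).coeff (k - n) ≠ 0 ∨ (P 1 1).coeff k ≠ 0 := by
      by_contra hco
      push_neg at hco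
      rw [hco.1, hco.2, zero_mul, zero_mul, add_zero] at hk
      exact hk rfl
    rcases hcase with hA | hB
    · have := h10s _ hA; omega
    · have := h11s k hB; omega

lemma prod_inv (F : ℤ → ℂ) (hF : ∀ n, ‖F n‖ < 1) :
    ∀ l : List ℤ, l.Pairwise (· < ·) → ∀ m M : ℤ, m ∈ l → F m ≠ 0 → M ∈ l → F M ≠ 0 →
    (∀ x ∈ l, F x ≠ 0 → m ≤ x ∧ x ≤ M) →
    Inv ((l.map (transferL F)).prod) m M := by
  intro l
  induction l using List.reverseRecOn with
  | nil => intro _ m M hm; simp at hm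
  | append_singleton l n ih =>
    intro hsort m M hm hFm hM hFM hbet
    classical
    obtain ⟨hsl, -, hlt⟩ := List.pairwise_append.mp hsort
    have hlt : ∀ x ∈ l, x < n := fun x hx => hlt x hx n (by simp)
    have prodeq : ((l ++ [n]).map (transferL F)).prod
        = (l.map (transferL F)).prod * transferL F n := by simp
    by_cases hn : F n = 0
    · have hm' : m ∈ l := by
        rcases List.mem_append.mp hm with h' | h'
        · exact h'
        · simp only [List.mem_singleton] at h'; subst h'; exact absurd hn hFm
      have hM' : M ∈ l := by
        rcases List.mem_append.mp hM with h' | h'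
        · exact h'
        · simp only [List.mem_singleton] at h'; subst h'; exact absurd hn hFM
      rw [prodeq, transferL_eq_one hn, mul_one]
      exact ih hsl m M hm' hFm hM' hFM
        (fun x hx hFx => hbet x (List.mem_append_left _ hx) hFx)
    · have hMn : M = n := by
        have h1 : n ≤ M := (hbet n (by simp) hn).2
        rcases List.mem_append.mp hM with h' | h'
        · exact absurd (hlt M h') (by omega)
        · simpa using h'
      subst hMn
      by_cases hall : ∀ x ∈ l, F x = 0
      · have hm' : m = M := by
          rcases List.mem_append.mp hm with h' | h'
          · exact absurd (hall m h') hFm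
          · simpa using h'
        rw [prodeq, prod_all_zero F l hall, one_mul, hm']
        exact inv_base hn (hF M)
      · push_neg at hall
        obtain ⟨x0, hx0l, hx0⟩ := hall
        have hm' : m ∈ l := by
          rcases List.mem_append.mp hm with h' | h'
          · exact h'
          · exfalso
            have h1 := (hbet x0 (List.mem_append_left _ hx0l) hx0).1
            have h2 := hlt x0 hx0l
            simp only [List.mem_singleton] at h'
            omega
        set t : Finset ℤ := l.toFinset.filter (fun x => F x ≠ 0) with ht
        have hmt : m ∈ t := by
          rw [ht, Finset.mem_filter, List.mem_toFinset]; exact ⟨hm', hFm⟩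
        have htne : t.Nonempty := ⟨m, hmt⟩
        set M' := t.max' htne with hM'def
        have hM't : M' ∈ t := t.max'_mem htne
        rw [ht, Finset.mem_filter, List.mem_toFinset] at hM't
        have hbet' : ∀ x ∈ l, F x ≠ 0 → m ≤ x ∧ x ≤ M' := fun x hx hFx =>
          ⟨(hbet x (List.mem_append_left _ hx) hFx).1,
           t.le_max' x (by rw [ht, Finset.mem_filter, List.mem_toFinset]; exact ⟨hx, hFx⟩)⟩
        rw [prodeq]
        exact inv_step (hF M) hn (hlt M' hM't.1)
          (ih hsl m M' hm' hFm hM't.1 hM't.2 hbet')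

end NlftAux

/-- For a nonzero finitely supported sequence `F` with support between `N₋` and `N₊`,
the Laurent polynomial `b` has exact lowest degree `N₋` and exact highest degree `N₊`,
and `a` has exact lowest degree `N₋ − N₊` and exact highest degree `0`. -/
theorem nlft_degrees (F : ℤ → ℂ) (s : Finset ℤ) (hsupp : ∀ n ∉ s, F n = 0)
    (hF : ∀ n, ‖F n‖ < 1) (Nm Np : ℤ)
    (hNm : F Nm ≠ 0) (hNp : F Np ≠ 0)
    (hbetween : ∀ n, F n ≠ 0 → Nm ≤ n ∧ n ≤ Np) :
    ((nlftL F s 0 1).coeff Nm ≠ 0 ∧ (nlftL F s 0 1).coeff Np ≠ 0 ∧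
      (∀ k, (nlftL F s 0 1).coeff k ≠ 0 → Nm ≤ k ∧ k ≤ Np)) ∧
    ((nlftL F s 0 0).coeff (Nm - Np) ≠ 0 ∧ (nlftL F s 0 0).coeff 0 ≠ 0 ∧
      (∀ k, (nlftL F s 0 0).coeff k ≠ 0 → Nm - Np ≤ k ∧ k ≤ 0)) := by
  have hNmS : Nm ∈ s := by by_contra h; exact hNm (hsupp _ h)
  have hNpS : Np ∈ s := by by_contra h; exact hNp (hsupp _ h)
  have h := NlftAux.prod_inv F hF (s.sort (· ≤ ·)) (s.sortedLT_sort.pairwise) Nm Np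
    ((Finset.mem_sort _).mpr hNmS) hNm ((Finset.mem_sort _).mpr hNpS) hNp
    (fun x _ hFx => hbetween x hFx)
  obtain ⟨⟨a0, am, as⟩, ⟨bm, bM, bs⟩, -, -⟩ := h
  exact ⟨⟨bm, bM, bs⟩, ⟨am, a0, as⟩⟩
end

section
/- Let f be a holomorphic function on the open unit disc D, not identically constant, mapping D into the closed unit disc, such that f and f' extend continuously to the closed disc. If |f| attains the value 1 at a boundary point z with |z| = 1 (i.e. |f(z)| = 1 is the maximum of |f| on the closed disc), then f'(z) = conj(z)·ω·f(z) for some strictly positive real number ω. -/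
open Metric Set Complex Filter Topology
set_option maxHeartbeats 1000000

/-- Derivative of `t ↦ normSq (F t)` for a real-to-complex function. -/
lemma aux_hasDerivWithinAt_normSq {F : ℝ → ℂ} {F' : ℂ} {s : Set ℝ} {x : ℝ}
    (h : HasDerivWithinAt F F' s x) :
    HasDerivWithinAt (fun t => Complex.normSq (F t))
      (2 * ((starRingEnd ℂ) (F x) * F').re) s x := by
  have hre : HasDerivWithinAt (fun t => (F t).re) F'.re s x := by
    have := Complex.reCLM.hasFDerivAt.comp_hasDerivWithinAt x h
    exact this
  have him : HasDerivWithinAt (fun t => (F t).im) F'.im s x := by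
    have := Complex.imCLM.hasFDerivAt.comp_hasDerivWithinAt x h
    exact this
  have h2 := (hre.mul hre).add (him.mul him)
  have e1 : (fun t => Complex.normSq (F t))
      = fun t => (F t).re * (F t).re + (F t).im * (F t).im := by
    funext t; rw [Complex.normSq_apply]
  rw [e1]
  refine h2.congr_deriv ?_
  simp [Complex.mul_re, Complex.conj_re, Complex.conj_im]
  ring

lemma aux_boundary_deriv (f g : ℂ → ℂ)
    (hf : ContinuousOn f (Metric.closedBall 0 1))
    (hg : ContinuousOn g (Metric.closedBall 0 1))
    (hderiv : ∀ w ∈ Metric.ball (0 : ℂ) 1, HasDerivAt f (g w) w)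
    {z : ℂ} (hz : z ∈ Metric.closedBall (0 : ℂ) 1) :
    HasDerivWithinAt f (g z) (Metric.closedBall 0 1) z := by
  rw [hasDerivWithinAt_iff_isLittleO, Asymptotics.isLittleO_iff]
  intro ε hε
  obtain ⟨δ, hδ, hδg⟩ : ∃ δ > 0, ∀ u ∈ Metric.closedBall (0:ℂ) 1,
      dist u z < δ → dist (g u) (g z) < ε / 2 := by
    have := Metric.continuousWithinAt_iff.mp (hg z hz) (ε/2) (by positivity)
    obtain ⟨δ, hδ, h⟩ := this
    exact ⟨δ, hδ, fun u hu hd => h hu hd⟩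
  have hzn : ‖z‖ ≤ 1 := by simpa using hz
  filter_upwards [self_mem_nhdsWithin,
    mem_nhdsWithin_of_mem_nhds (Metric.ball_mem_nhds z (by positivity : (0:ℝ) < δ/2))]
    with w hw hwball
  have hwn : ‖w‖ ≤ 1 := by simpa using hw
  have hwz : ‖w - z‖ < δ / 2 := by simpa [dist_eq_norm] using hwball
  -- the key estimate for interior scaled points
  set a : ℝ := max 0 (1 - δ/2) with ha
  have ha1 : a < 1 := by
    apply max_lt one_pos
    linarith
  have key : ∀ s ∈ Ioo a 1,
      ‖f (s • w) - f (s • z) - (s • w - s • z) • g z‖ ≤ ε / 2 * ‖w - z‖ := by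
    intro s hs
    have hs0 : 0 ≤ s := le_of_lt (lt_of_le_of_lt (le_max_left _ _) hs.1)
    have hs1 : s < 1 := hs.2
    have hsδ : 1 - δ/2 < s := lt_of_le_of_lt (le_max_right _ _) hs.1
    set S : Set ℂ := Metric.ball (0:ℂ) 1 ∩ Metric.ball z δ with hS
    have hconv : Convex ℝ S := (convex_ball _ _).inter (convex_ball _ _)
    have hmemz : s • z ∈ S := by
      constructor
      · rw [mem_ball_zero_iff]
        calc ‖s • z‖ = |s| * ‖z‖ := by rw [norm_smul, Real.norm_eq_abs]
        _ ≤ |s| * 1 := by nlinarith [abs_nonneg s, hzn]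
        _ < 1 := by rw [_root_.abs_of_nonneg hs0]; linarith
      · rw [Metric.mem_ball, dist_eq_norm]
        have : s • z - z = (s - 1) • z := by rw [sub_smul, one_smul]
        rw [this, norm_smul, Real.norm_eq_abs, _root_.abs_of_nonpos (by linarith)]
        nlinarith
    have hmemw : s • w ∈ S := by
      constructor
      · rw [mem_ball_zero_iff]
        calc ‖s • w‖ = |s| * ‖w‖ := by rw [norm_smul, Real.norm_eq_abs]
        _ ≤ |s| * 1 := by nlinarith [abs_nonneg s, hwn]
        _ < 1 := by rw [_root_.abs_of_nonneg hs0]; linarith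
      · rw [Metric.mem_ball, dist_eq_norm]
        calc ‖s • w - z‖ ≤ ‖s • w - s • z‖ + ‖s • z - z‖ := by
              simpa using norm_sub_le_norm_sub_add_norm_sub (s • w) (s • z) z
        _ = |s| * ‖w - z‖ + |s - 1| * ‖z‖ := by
              rw [← smul_sub, norm_smul, Real.norm_eq_abs,
                show s • z - z = (s - 1) • z by rw [sub_smul, one_smul], norm_smul,
                Real.norm_eq_abs]
        _ < δ := by
              rw [_root_.abs_of_nonneg hs0, _root_.abs_of_nonpos (by linarith)]
              nlinarith
    have hFd : ∀ u ∈ S, HasDerivWithinAt (fun u => f u - u * g z) (g u - g z) S u := by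
      intro u hu
      exact ((hderiv u hu.1).sub (hasDerivAt_mul_const (g z))).hasDerivWithinAt
    have hFb : ∀ u ∈ S, ‖g u - g z‖ ≤ ε / 2 := by
      intro u hu
      have := hδg u (Metric.ball_subset_closedBall hu.1) (by simpa using hu.2)
      rw [dist_eq_norm] at this
      linarith
    have := hconv.norm_image_sub_le_of_norm_hasDerivWithin_le hFd hFb hmemz hmemw
    have heq : (f (s • w) - s • w * g z) - (f (s • z) - s • z * g z)
        = f (s • w) - f (s • z) - (s • w - s • z) • g z := by
      simp [smul_eq_mul]; ring
    rw [heq] at this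
    calc ‖f (s • w) - f (s • z) - (s • w - s • z) • g z‖
        ≤ ε / 2 * ‖s • w - s • z‖ := this
      _ = ε / 2 * (|s| * ‖w - z‖) := by rw [← smul_sub, norm_smul, Real.norm_eq_abs]
      _ ≤ ε / 2 * ‖w - z‖ := by
          rw [_root_.abs_of_nonneg hs0]
          nlinarith [mul_nonneg (mul_nonneg hε.le (norm_nonneg (w - z)))
            (by linarith : (0:ℝ) ≤ 1 - s)]
  -- pass to the limit s → 1⁻
  have hmapsw : MapsTo (fun s : ℝ => s • w) (Icc (0:ℝ) 1) (Metric.closedBall (0:ℂ) 1) := by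
    intro s hs
    rw [Metric.mem_closedBall, dist_zero_right, norm_smul, Real.norm_eq_abs,
      _root_.abs_of_nonneg hs.1]
    nlinarith [hs.2, norm_nonneg w]
  have hmapsz : MapsTo (fun s : ℝ => s • z) (Icc (0:ℝ) 1) (Metric.closedBall (0:ℂ) 1) := by
    intro s hs
    rw [Metric.mem_closedBall, dist_zero_right, norm_smul, Real.norm_eq_abs,
      _root_.abs_of_nonneg hs.1]
    nlinarith [hs.2, norm_nonneg z]
  set Φ : ℝ → ℝ := fun s => ‖f (s • w) - f (s • z) - (s • w - s • z) • g z‖ with hΦ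
  have h1 : ContinuousOn (fun s : ℝ => f (s • w)) (Icc (0:ℝ) 1) :=
    hf.comp ((continuous_id.smul continuous_const).continuousOn) hmapsw
  have h2 : ContinuousOn (fun s : ℝ => f (s • z)) (Icc (0:ℝ) 1) :=
    hf.comp ((continuous_id.smul continuous_const).continuousOn) hmapsz
  have hcont : ContinuousWithinAt Φ (Icc (0:ℝ) 1) 1 := by
    apply ContinuousWithinAt.norm
    have h3 : ContinuousWithinAt (fun s : ℝ => (s • w - s • z) • g z) (Icc (0:ℝ) 1) 1 :=
      (by fun_prop : Continuous (fun s : ℝ => (s • w - s • z) • g z)).continuousWithinAt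
    exact ((h1 1 (by norm_num)).sub (h2 1 (by norm_num))).sub h3
  have hne : (𝓝[Ioo a 1] (1:ℝ)).NeBot := right_nhdsWithin_Ioo_neBot ha1
  have htend : Tendsto Φ (𝓝[Ioo a 1] 1) (𝓝 (Φ 1)) :=
    (hcont.mono (fun x hx => ⟨le_of_lt (lt_of_le_of_lt (le_max_left _ _) hx.1), le_of_lt hx.2⟩))
  have hlim : Φ 1 ≤ ε / 2 * ‖w - z‖ := by
    refine le_of_tendsto htend ?_
    filter_upwards [self_mem_nhdsWithin] with s hs using key s hs
  have : Φ 1 = ‖f w - f z - (w - z) • g z‖ := by simp [hΦ]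
  rw [this] at hlim
  calc ‖f w - f z - (w - z) • g z‖ ≤ ε / 2 * ‖w - z‖ := hlim
    _ ≤ ε * ‖w - z‖ := by nlinarith [norm_nonneg (w - z)]

/-- Boundary version of the maximum principle: if `f` is a nonconstant holomorphic self-map
of the closed unit disc, with `f` and its derivative `g` extending continuously to the
closed disc, and `|f|` attains the value `1` at a boundary point `z`, then
`f'(z) = conj(z)·ω·f(z)` for some strictly positive real `ω`. -/
theorem boundary_maximum_principle (f g : ℂ → ℂ)
    (hf : ContinuousOn f (Metric.closedBall 0 1))
    (hg : ContinuousOn g (Metric.closedBall 0 1))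
    (hderiv : ∀ w ∈ Metric.ball (0 : ℂ) 1, HasDerivAt f (g w) w)
    (hnc : ∃ w ∈ Metric.ball (0 : ℂ) 1, ∃ w' ∈ Metric.ball (0 : ℂ) 1, f w ≠ f w')
    (hbound : ∀ w ∈ Metric.closedBall (0 : ℂ) 1, ‖f w‖ ≤ 1)
    (z : ℂ) (hz : ‖z‖ = 1) (hmax : ‖f z‖ = 1) :
    ∃ ω : ℝ, 0 < ω ∧ g z = (starRingEnd ℂ) z * (ω : ℂ) * f z := by
  have hzball : z ∈ Metric.closedBall (0:ℂ) 1 := by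
    rw [Metric.mem_closedBall, dist_zero_right, hz]
  have hdiff : DifferentiableOn ℂ f (Metric.ball (0:ℂ) 1) := fun w hw =>
    (hderiv w hw).differentiableAt.differentiableWithinAt
  -- strict maximum principle: |f| < 1 on the open ball
  have hlt : ∀ w ∈ Metric.ball (0:ℂ) 1, ‖f w‖ < 1 := by
    intro w hw
    rcases (hbound w (Metric.ball_subset_closedBall hw)).lt_or_eq with h | h
    · exact h
    · exfalso
      have hmax' : IsMaxOn (norm ∘ f) (Metric.ball (0:ℂ) 1) w := by
        intro u hu
        simp only [Function.comp, h]
        exact hbound u (Metric.ball_subset_closedBall hu)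
      have heq := Complex.eqOn_of_isPreconnected_of_isMaxOn_norm
        ((convex_ball (0:ℂ) 1).isPreconnected) Metric.isOpen_ball hdiff hw hmax'
      obtain ⟨w₁, hw₁, w₂, hw₂, hne⟩ := hnc
      exact hne ((heq hw₁).trans (heq hw₂).symm)
  set a : ℂ := f 0 with haa
  set A : ℝ := ‖a‖ with hAA
  have hA : A < 1 := hlt 0 (by simp)
  have hA0 : 0 ≤ A := norm_nonneg a
  -- the denominator never vanishes
  have hden : ∀ w ∈ Metric.closedBall (0:ℂ) 1, 1 - (starRingEnd ℂ) a * f w ≠ 0 := by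
    intro w hw h0
    have h1 : ‖(starRingEnd ℂ) a * f w‖ = 1 := by
      have : (starRingEnd ℂ) a * f w = 1 := by linear_combination -h0
      rw [this, norm_one]
    rw [norm_mul, Complex.norm_conj] at h1
    nlinarith [hbound w hw, norm_nonneg (f w)]
  set h : ℂ → ℂ := fun w => (f w - a) / (1 - (starRingEnd ℂ) a * f w) with hh
  -- the key algebraic identity
  have key : ∀ v : ℂ, Complex.normSq (1 - (starRingEnd ℂ) a * v) - Complex.normSq (v - a)
      = (1 - Complex.normSq v) * (1 - Complex.normSq a) := by
    intro v
    simp only [Complex.normSq_apply, Complex.sub_re, Complex.sub_im, Complex.mul_re,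
      Complex.mul_im, Complex.one_re, Complex.one_im, Complex.conj_re, Complex.conj_im]
    ring
  have hh0 : h 0 = 0 := by simp [hh, haa]
  have hhd : DifferentiableOn ℂ h (Metric.ball (0:ℂ) 1) := by
    apply DifferentiableOn.div (hdiff.sub (differentiableOn_const a))
      ((differentiableOn_const 1).sub ((differentiableOn_const _).mul hdiff))
    intro w hw
    exact hden w (Metric.ball_subset_closedBall hw)
  have hmaps : MapsTo h (Metric.ball (0:ℂ) 1) (Metric.ball (0:ℂ) 1) := by
    intro w hw
    rw [Metric.mem_ball, dist_zero_right, hh]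
    have hvn : Complex.normSq (f w) < 1 := by
      rw [← Complex.sq_norm]
      nlinarith [hlt w hw, norm_nonneg (f w)]
    have han : Complex.normSq a < 1 := by
      rw [← Complex.sq_norm]; nlinarith
    have hpos := key (f w)
    have hd0 := hden w (Metric.ball_subset_closedBall hw)
    have hdpos : 0 < Complex.normSq (1 - (starRingEnd ℂ) a * f w) :=
      Complex.normSq_pos.mpr hd0
    rw [norm_div, div_lt_one (norm_pos_iff.mpr hd0)]
    rw [Complex.norm_def, Complex.norm_def]
    apply Real.sqrt_lt_sqrt (Complex.normSq_nonneg _)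
    nlinarith [Complex.normSq_nonneg (f w - a)]
  -- Schwarz lemma
  have hschwarz : ∀ w ∈ Metric.ball (0:ℂ) 1, ‖h w‖ ≤ ‖w‖ := by
    intro w hw
    exact Complex.norm_le_norm_of_mapsTo_ball hhd (hmaps.mono_right Metric.ball_subset_closedBall) hh0 (by simpa [Metric.mem_ball, dist_zero_right] using hw)
  -- radial estimate
  have hrad : ∀ t ∈ Ico (0:ℝ) 1,
      Complex.normSq (f (t • z)) ≤ 1 - (1 - A)/2 * (1 - t) := by
    intro t ht
    obtain ⟨ht0, ht1⟩ := ht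
    have htz : t • z ∈ Metric.ball (0:ℂ) 1 := by
      rw [Metric.mem_ball, dist_zero_right, norm_smul, Real.norm_eq_abs, _root_.abs_of_nonneg ht0,
        hz, mul_one]
      exact ht1
    set v : ℂ := f (t • z) with hv
    set u : ℂ := h (t • z) with hu
    have habsu : ‖u‖ ≤ t := by
      have := hschwarz _ htz
      rw [← hu] at this
      calc ‖u‖ ≤ ‖t • z‖ := this
        _ = t := by
            rw [show (t • z : ℂ) = (t : ℂ) * z by simp [Complex.real_smul], norm_mul,
              Complex.norm_real, Real.norm_eq_abs, hz, mul_one, _root_.abs_of_nonneg ht0]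
    have hmul : u * (1 - (starRingEnd ℂ) a * v) = v - a := by
      rw [hu, hh]
      exact div_mul_cancel₀ _ (hden _ (Metric.ball_subset_closedBall htz))
    have hnsmul : Complex.normSq u * Complex.normSq (1 - (starRingEnd ℂ) a * v)
        = Complex.normSq (v - a) := by rw [← map_mul, hmul]
    have hkey := key v
    -- normSq bounds
    have hub : Complex.normSq u ≤ t^2 := by
      rw [← Complex.sq_norm]
      nlinarith [norm_nonneg u]
    have habsv : ‖v‖ ≤ 1 := hbound _ (Metric.ball_subset_closedBall htz)
    have hdb : (1 - A)^2 ≤ Complex.normSq (1 - (starRingEnd ℂ) a * v) := by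
      rw [← Complex.sq_norm]
      have h1 : ‖(starRingEnd ℂ) a * v‖ ≤ A := by
        rw [norm_mul, Complex.norm_conj]
        nlinarith [norm_nonneg v]
      have h2 : 1 - A ≤ ‖1 - (starRingEnd ℂ) a * v‖ := by
        calc 1 - A ≤ 1 - ‖(starRingEnd ℂ) a * v‖ := by linarith
          _ ≤ ‖(1:ℂ)‖ - ‖(starRingEnd ℂ) a * v‖ := by rw [norm_one]
          _ ≤ ‖1 - (starRingEnd ℂ) a * v‖ := by
              have := norm_sub_norm_le (1:ℂ) ((starRingEnd ℂ) a * v)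
              simpa using this
      nlinarith [norm_nonneg (1 - (starRingEnd ℂ) a * v)]
    have hna : Complex.normSq a = A^2 := by rw [← Complex.sq_norm]
    have hnv1 : Complex.normSq v ≤ 1 := by
      rw [← Complex.sq_norm]
      nlinarith [norm_nonneg v]
    -- (1 - normSq u) * normSq(1-āv) = (1 - normSq v)(1 - normSq a)
    have hmain : (1 - Complex.normSq u) * Complex.normSq (1 - (starRingEnd ℂ) a * v)
        = (1 - Complex.normSq v) * (1 - Complex.normSq a) := by
      rw [sub_mul, one_mul, hnsmul]
      linarith [hkey]
    have hXnn : (0:ℝ) ≤ 1 - Complex.normSq v := by linarith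
    have hunn : (0:ℝ) ≤ 1 - Complex.normSq u := by nlinarith
    have h5 : (1-t^2)*(1-A)^2 ≤ (1 - Complex.normSq u)
        * Complex.normSq (1 - (starRingEnd ℂ) a * v) :=
      mul_le_mul (by nlinarith) hdb (sq_nonneg _) hunn
    have h6 : (1-t^2)*(1-A)^2 ≤ (1 - Complex.normSq v) * (1 - A^2) := by
      rw [hmain, hna] at h5; exact h5
    have h7 : (1-t)*(1-A) ≤ (1 - Complex.normSq v) * (1+A) := by
      nlinarith [h6, hXnn, mul_nonneg (mul_nonneg ht0 (by linarith : (0:ℝ) ≤ 1-t))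
        (sq_nonneg (1-A))]
    nlinarith [h7, hXnn, mul_nonneg hXnn (by linarith : (0:ℝ) ≤ 1 - A)]
  -- derivative of f at z within the closed ball
  have hfz : HasDerivWithinAt f (g z) (Metric.closedBall 0 1) z :=
    aux_boundary_deriv f g hf hg hderiv hzball
  have hnz1 : Complex.normSq z = 1 := by rw [← Complex.sq_norm, hz]; norm_num
  have hnfz1 : Complex.normSq (f z) = 1 := by rw [← Complex.sq_norm, hmax]; norm_num
  -- radial derivative
  have hmapsz : MapsTo (fun t : ℝ => t • z) (Icc (0:ℝ) 1) (Metric.closedBall (0:ℂ) 1) := by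
    intro t ht
    rw [Metric.mem_closedBall, dist_zero_right, norm_smul, Real.norm_eq_abs,
      _root_.abs_of_nonneg ht.1, hz, mul_one]
    exact ht.2
  have hL : HasDerivWithinAt (fun t : ℝ => t • z) z (Icc (0:ℝ) 1) 1 := by
    simpa using ((hasDerivAt_id (1:ℝ)).smul_const z).hasDerivWithinAt
  have hcomp : HasDerivWithinAt (fun t : ℝ => f (t • z)) (z * g z) (Icc (0:ℝ) 1) 1 := by
    have hfz' : HasFDerivWithinAt f
        (((ContinuousLinearMap.id ℂ ℂ).smulRight (g z)).restrictScalars ℝ)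
        (Metric.closedBall 0 1) ((1:ℝ) • z) := by
      rw [one_smul]
      exact hfz.hasFDerivWithinAt.restrictScalars ℝ
    have := hfz'.comp_hasDerivWithinAt (1:ℝ) hL hmapsz
    refine this.congr_deriv ?_
    simp [smul_eq_mul]
  have hρ : HasDerivWithinAt (fun t : ℝ => Complex.normSq (f (t • z)))
      (2 * ((starRingEnd ℂ) (f z) * (z * g z)).re) (Icc (0:ℝ) 1) 1 := by
    have := aux_hasDerivWithinAt_normSq hcomp
    simpa using this
  set D : ℝ := 2 * ((starRingEnd ℂ) (f z) * (z * g z)).re with hD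
  have hDC : (1 - A)/2 ≤ D := by
    have hslope := hasDerivWithinAt_iff_tendsto_slope.mp hρ
    rw [Icc_sdiff_right] at hslope
    have hne : (𝓝[Ico (0:ℝ) 1] (1:ℝ)).NeBot := right_nhdsWithin_Ico_neBot one_pos
    refine ge_of_tendsto hslope ?_
    filter_upwards [self_mem_nhdsWithin] with t ht
    have h1 : Complex.normSq (f (t • z)) ≤ 1 - (1 - A)/2 * (1 - t) := hrad t ht
    have hρ1 : Complex.normSq (f ((1:ℝ) • z)) = 1 := by rw [one_smul]; exact hnfz1
    rw [slope_def_field]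
    rw [hρ1]
    rw [le_div_iff_of_neg (by linarith [ht.2] : t - 1 < 0)]
    nlinarith [ht.1, ht.2]
  -- tangential derivative
  have htan : ((starRingEnd ℂ) (f z) * (z * Complex.I * g z)).re = 0 := by
    set γ : ℝ → ℂ := fun θ => z * Complex.exp (θ * Complex.I) with hγdef
    have hγ0 : γ 0 = z := by simp [hγdef]
    have hγmem : ∀ θ : ℝ, γ θ ∈ Metric.closedBall (0:ℂ) 1 := by
      intro θ
      rw [Metric.mem_closedBall, dist_zero_right, hγdef]
      simp only [norm_mul, hz, one_mul]
      rw [Complex.norm_exp]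
      simp
    have hγ : HasDerivAt γ (z * Complex.I) 0 := by
      have h1 : HasDerivAt (fun θ : ℝ => (θ:ℂ) * Complex.I) Complex.I 0 := by
        simpa using (Complex.ofRealCLM.hasDerivAt (x := (0:ℝ))).mul_const Complex.I
      have h2 := h1.cexp
      have h3 := h2.const_mul z
      simpa [hγdef] using h3
    have hcomp2 : HasDerivAt (fun θ : ℝ => f (γ θ)) (z * Complex.I * g z) 0 := by
      have hfz' : HasFDerivWithinAt f
          (((ContinuousLinearMap.id ℂ ℂ).smulRight (g z)).restrictScalars ℝ)
          (Metric.closedBall 0 1) (γ 0) := by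
        rw [hγ0]
        exact hfz.hasFDerivWithinAt.restrictScalars ℝ
      have := hfz'.comp_hasDerivWithinAt (0:ℝ)
        (hγ.hasDerivWithinAt (s := Set.univ)) (fun θ _ => hγmem θ)
      rw [hasDerivWithinAt_univ] at this
      refine this.congr_deriv ?_
      simp [smul_eq_mul]
    have hψ : HasDerivAt (fun θ : ℝ => Complex.normSq (f (γ θ)))
        (2 * ((starRingEnd ℂ) (f z) * (z * Complex.I * g z)).re) 0 := by
      have := aux_hasDerivWithinAt_normSq (s := univ) hcomp2.hasDerivWithinAt
      rw [hasDerivWithinAt_univ] at this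
      simpa [hγ0] using this
    have hlmax : IsLocalMax (fun θ : ℝ => Complex.normSq (f (γ θ))) 0 := by
      apply Filter.Eventually.of_forall
      intro θ
      have h1 : ‖f (γ θ)‖ ≤ 1 := hbound _ (hγmem θ)
      have h2 : Complex.normSq (f (γ θ)) ≤ 1 := by
        rw [← Complex.sq_norm]
        nlinarith [norm_nonneg (f (γ θ))]
      simpa [hγ0, hnfz1] using h2
    have := hlmax.hasDerivAt_eq_zero hψ
    linarith [this]
  -- assemble
  set c : ℂ := (starRingEnd ℂ) (f z) * z * g z with hc
  have hcim : c.im = 0 := by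
    have h1 : (Complex.I * c).re = 0 := by
      rw [show Complex.I * c = (starRingEnd ℂ) (f z) * (z * Complex.I * g z) by rw [hc]; ring]
      exact htan
    simpa [Complex.mul_re, Complex.I_re, Complex.I_im] using h1
  have hcre : (1 - A)/4 ≤ c.re := by
    have hDc : D = 2 * c.re := by
      rw [hD, hc]
      congr 2
      ring
    linarith [hDC]
  refine ⟨c.re, by linarith, ?_⟩
  have hc1 : ((c.re : ℝ) : ℂ) = c := by
    apply Complex.ext
    · simp
    · simp [hcim]
  rw [hc1]
  have h1 : z * (starRingEnd ℂ) z = 1 := by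
    rw [Complex.mul_conj, hnz1, Complex.ofReal_one]
  have h2 : f z * (starRingEnd ℂ) (f z) = 1 := by
    rw [Complex.mul_conj, hnfz1, Complex.ofReal_one]
  rw [show (starRingEnd ℂ) z * c * f z
      = (z * (starRingEnd ℂ) z) * (f z * (starRingEnd ℂ) (f z)) * g z by rw [hc]; ring,
    h1, h2, one_mul, one_mul]
end
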